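/- arXiv:2511.21487 — 2 statements merged into one kernel-verified Lean document; each statement's English description precedes it below -/
import Mathlib

section
/- Let ρ₀ be a pure stabilizer state with stabilizer generators s_1, g_2, …, g_n such that the single-qubit operator Z_j anticommutes with s_1 and commutes with all g_i. Let T = diag(1, e^{iπ/4}) act on qubit j. Then TρT† = 2^{-n} (I + (Z̄ − Ȳ)/√2) ∏_{i=2}^n (I + g_i), where X̄ := Z_j, Z̄ := s_1 and Ȳ := i X̄ Z̄. -/
open Matrix BigOperators Finset

/-- The four single-qubit Pauli matrices `I, X, Y, Z`. -/
noncomputable def pauli1 : Fin 4 → Matrix (Fin 2) (Fin 2) ℂ :=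
  ![(1 : Matrix (Fin 2) (Fin 2) ℂ),
    !![0, 1; 1, 0],
    !![0, -Complex.I; Complex.I, 0],
    !![1, 0; 0, -1]]

/-- The `n`-qubit Pauli string `⨂ₖ pauli1 (s k)` as a matrix on `(Fin n → Fin 2)`. -/
noncomputable def pauliString {n : ℕ} (s : Fin n → Fin 4) :
    Matrix (Fin n → Fin 2) (Fin n → Fin 2) ℂ :=
  Matrix.of fun i j => ∏ k, pauli1 (s k) (i k) (j k)

/-- `M` is a Pauli operator with phase `±1`. -/
def IsPauliPM {n : ℕ} (M : Matrix (Fin n → Fin 2) (Fin n → Fin 2) ℂ) : Prop :=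
  ∃ (ε : ℂ) (s : Fin n → Fin 4), (ε = 1 ∨ ε = -1) ∧ M = ε • pauliString s

/-- `M` is a `±1`-phase Pauli operator whose support is contained in `A`. -/
def SuppIn {n : ℕ} (A : Finset (Fin n)) (M : Matrix (Fin n → Fin 2) (Fin n → Fin 2) ℂ) : Prop :=
  ∃ (ε : ℂ) (s : Fin n → Fin 4), (ε = 1 ∨ ε = -1) ∧ M = ε • pauliString s ∧
    ∀ k ∉ A, s k = 0

/-- The element `∏_{i : f i} g i` of the group generated by the (commuting) `g i`. -/
noncomputable def grpElem {n m : ℕ} (g : Fin m → Matrix (Fin n → Fin 2) (Fin n → Fin 2) ℂ)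
    (f : Fin m → Bool) : Matrix (Fin n → Fin 2) (Fin n → Fin 2) ℂ :=
  ((List.finRange m).map (fun i => if f i then g i else 1)).prod

/-- Mixed-state stabilizer 2-Rényi entropy
`M̃₂(ρ) = −log₂( Σ_P Tr(ρP)⁴ / Σ_P Tr(ρP)² )`. -/
noncomputable def sre2 {n : ℕ} (ρ : Matrix (Fin n → Fin 2) (Fin n → Fin 2) ℂ) : ℝ :=
  - Real.logb 2 (((∑ P : Fin n → Fin 4, ((ρ * pauliString P).trace) ^ 4) /
      (∑ P : Fin n → Fin 4, ((ρ * pauliString P).trace) ^ 2)).re)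

/-- A single-qubit gate `M` acting on qubit `j` of `n` qubits (identity elsewhere). -/
noncomputable def embed {n : ℕ} (j : Fin n) (M : Matrix (Fin 2) (Fin 2) ℂ) :
    Matrix (Fin n → Fin 2) (Fin n → Fin 2) ℂ :=
  Matrix.of fun a b => ∏ k, (if k = j then M else (1 : Matrix (Fin 2) (Fin 2) ℂ)) (a k) (b k)

/-- The T gate `diag(1, e^{iπ/4})`. -/
noncomputable def Tgate : Matrix (Fin 2) (Fin 2) ℂ :=
  !![1, 0; 0, Complex.exp (Complex.I * (Real.pi / 4))]

/-- The delta product over the complement of j. -/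
noncomputable def Dlt {n : ℕ} (j : Fin n) (a b : Fin n → Fin 2) : ℂ :=
  ∏ k ∈ Finset.univ.erase j, (if a k = b k then (1:ℂ) else 0)

lemma embed_apply' {n : ℕ} (j : Fin n) (M : Matrix (Fin 2) (Fin 2) ℂ) (a b : Fin n → Fin 2) :
    embed j M a b = M (a j) (b j) * Dlt j a b := by
  show (∏ k, (if k = j then M else (1 : Matrix (Fin 2) (Fin 2) ℂ)) (a k) (b k)) = _
  rw [← Finset.mul_prod_erase _ _ (Finset.mem_univ j)]
  simp only [if_pos rfl]
  congr 1
  refine Finset.prod_congr rfl fun k hk => ?_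
  rw [if_neg (Finset.ne_of_mem_erase hk), Matrix.one_apply]

lemma pauliZ_apply' {n : ℕ} (j : Fin n) (a b : Fin n → Fin 2) :
    pauliString (fun k => if k = j then (3 : Fin 4) else 0) a b
      = pauli1 3 (a j) (b j) * Dlt j a b := by
  show (∏ k, pauli1 (if k = j then (3:Fin 4) else 0) (a k) (b k)) = _
  rw [← Finset.mul_prod_erase _ _ (Finset.mem_univ j)]
  simp only [if_pos rfl]
  congr 1
  refine Finset.prod_congr rfl fun k hk => ?_
  rw [if_neg (Finset.ne_of_mem_erase hk)]
  show (1 : Matrix (Fin 2) (Fin 2) ℂ) (a k) (b k) = _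
  rw [Matrix.one_apply]

lemma one_apply' {n : ℕ} (j : Fin n) (a b : Fin n → Fin 2) :
    (1 : Matrix (Fin n → Fin 2) (Fin n → Fin 2) ℂ) a b
      = (1 : Matrix (Fin 2) (Fin 2) ℂ) (a j) (b j) * Dlt j a b := by
  by_cases hab : a = b
  · subst hab; simp [Matrix.one_apply, Dlt]
  · rw [Matrix.one_apply_ne hab]
    by_cases hj : a j = b j
    · obtain ⟨k, hk⟩ : ∃ k, a k ≠ b k := by
        by_contra h; push_neg at h; exact hab (funext h)
      have hkj : k ≠ j := fun h => hk (h ▸ hj)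
      rw [Dlt, Finset.prod_eq_zero (Finset.mem_erase.mpr ⟨hkj, Finset.mem_univ k⟩)
        (if_neg hk : (if a k = b k then (1:ℂ) else 0) = 0)]
      ring
    · rw [Matrix.one_apply_ne hj]; ring

lemma fin2cases : ∀ x : Fin 2, x = 0 ∨ x = 1 := by decide

lemma Zdiag {n : ℕ} (j : Fin n) :
    pauliString (fun k => if k = j then (3 : Fin 4) else 0)
      = Matrix.diagonal (fun a : Fin n → Fin 2 => if a j = 0 then (1:ℂ) else -1) := by
  ext a b
  rw [pauliZ_apply']
  by_cases hab : a = b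
  · subst hab
    have hD : Dlt j a a = 1 := by simp [Dlt]
    rw [hD, Matrix.diagonal_apply_eq, mul_one]
    rcases fin2cases (a j) with h | h <;> rw [h] <;> simp [pauli1]
  · rw [Matrix.diagonal_apply_ne _ hab]
    by_cases hj : a j = b j
    · obtain ⟨k, hk⟩ : ∃ k, a k ≠ b k := by
        by_contra h; push_neg at h; exact hab (funext h)
      have hkj : k ≠ j := fun h => hk (h ▸ hj)
      rw [Dlt, Finset.prod_eq_zero (Finset.mem_erase.mpr ⟨hkj, Finset.mem_univ k⟩)
        (if_neg hk : (if a k = b k then (1:ℂ) else 0) = 0)]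
      ring
    · have : pauli1 3 (a j) (b j) = 0 := by
        rcases fin2cases (a j) with h | h <;> rcases fin2cases (b j) with h' | h' <;>
          first
          | (exact absurd (h.trans h'.symm) hj)
          | (rw [h, h']; simp [pauli1])
      rw [this]; ring

lemma ZZ_one {n : ℕ} (j : Fin n) :
    pauliString (fun k => if k = j then (3 : Fin 4) else 0) *
      pauliString (fun k => if k = j then (3 : Fin 4) else 0) = 1 := by
  rw [Zdiag, Matrix.diagonal_mul_diagonal]
  have hfun : (fun a : Fin n → Fin 2 =>
      (if a j = 0 then (1:ℂ) else -1) * (if a j = 0 then (1:ℂ) else -1)) = fun _ => (1:ℂ) :=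
    funext fun a => by by_cases h : a j = 0 <;> simp [h]
  rw [hfun, ← Matrix.diagonal_one]

lemma Z_herm {n : ℕ} (j : Fin n) :
    (pauliString (fun k => if k = j then (3 : Fin 4) else 0))ᴴ
      = pauliString (fun k => if k = j then (3 : Fin 4) else 0) := by
  rw [Zdiag, Matrix.diagonal_conjTranspose]
  have hfun : (star fun a : Fin n → Fin 2 => if a j = 0 then (1:ℂ) else -1)
      = fun a : Fin n → Fin 2 => if a j = 0 then (1:ℂ) else -1 :=
    funext fun a => by by_cases h : a j = 0 <;> simp [h, Pi.star_apply]
  rw [hfun]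

lemma omega_val : Complex.exp (Complex.I * (Real.pi / 4))
    = (Real.sqrt 2 : ℂ)/2 + ((Real.sqrt 2 : ℂ)/2) * Complex.I := by
  rw [mul_comm, Complex.exp_mul_I]
  have h4 : ((Real.pi : ℂ) / 4) = ((Real.pi / 4 : ℝ) : ℂ) := by push_cast; ring
  rw [h4, ← Complex.ofReal_cos, ← Complex.ofReal_sin, Real.cos_pi_div_four,
    Real.sin_pi_div_four]
  push_cast; ring

noncomputable def ωc : ℂ := (Real.sqrt 2 : ℂ)/2 + ((Real.sqrt 2 : ℂ)/2) * Complex.I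

lemma Tgate_pt : ∀ x y : Fin 2,
    Tgate x y = ((1 + ωc)/2) * (1 : Matrix (Fin 2) (Fin 2) ℂ) x y
      + ((1 - ωc)/2) * pauli1 3 x y := by
  intro x y
  rcases fin2cases x with hx | hx <;> rcases fin2cases y with hy | hy <;>
    subst hx <;> subst hy <;>
    simp [Tgate, pauli1, Matrix.one_apply, omega_val, ωc] <;> ring

lemma T_decomp {n : ℕ} (j : Fin n) :
    embed j Tgate = ((1 + ωc)/2) • (1 : Matrix (Fin n → Fin 2) (Fin n → Fin 2) ℂ)
      + ((1 - ωc)/2) • pauliString (fun k => if k = j then (3 : Fin 4) else 0) := by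
  ext a b
  rw [Matrix.add_apply, Matrix.smul_apply, Matrix.smul_apply, smul_eq_mul, smul_eq_mul,
    embed_apply', pauliZ_apply', one_apply', Tgate_pt]
  ring

noncomputable def ωc' : ℂ := (Real.sqrt 2 : ℂ)/2 - ((Real.sqrt 2 : ℂ)/2) * Complex.I

lemma TH_decomp {n : ℕ} (j : Fin n) :
    (embed j Tgate)ᴴ = ((1 + ωc')/2) • (1 : Matrix (Fin n → Fin 2) (Fin n → Fin 2) ℂ)
      + ((1 - ωc')/2) • pauliString (fun k => if k = j then (3 : Fin 4) else 0) := by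
  rw [T_decomp, Matrix.conjTranspose_add, Matrix.conjTranspose_smul,
    Matrix.conjTranspose_smul, Matrix.conjTranspose_one, Z_herm]
  have hst : star ωc = ωc' := by
    simp only [ωc, ωc', star_add, star_mul', star_div₀, Complex.star_def,
      Complex.conj_ofReal, Complex.conj_I, map_ofNat]
    ring
  have h1 : star ((1 + ωc)/2) = (1 + ωc')/2 := by
    rw [star_div₀, star_add, star_one, hst, star_ofNat]
  have h2 : star ((1 - ωc)/2) = (1 - ωc')/2 := by
    rw [star_div₀, star_sub, star_one, hst, star_ofNat]
  rw [h1, h2]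


/-- for a pure stabilizer state `ρ₀ = 2^{-n}(I+s₁)∏ᵢ(I+gᵢ)` whose generator `s₁`
anticommutes with `Z_j` while all the `gᵢ` commute with `Z_j`, the `T` gate on qubit `j`
produces `TρT† = 2^{-n}(I + (Z̄ − Ȳ)/√2)∏ᵢ(I+gᵢ)` with `X̄ = Z_j`, `Z̄ = s₁`, `Ȳ = iX̄Z̄`. -/
theorem stmt_2 {n m : ℕ} (hnm : n = m + 1) (j : Fin n)
    (s1 : Matrix (Fin n → Fin 2) (Fin n → Fin 2) ℂ)
    (g : Fin m → Matrix (Fin n → Fin 2) (Fin n → Fin 2) ℂ)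
    (Zj Tj : Matrix (Fin n → Fin 2) (Fin n → Fin 2) ℂ)
    (hZj : Zj = pauliString (fun k => if k = j then (3 : Fin 4) else 0))
    (hTj : Tj = embed j Tgate)
    (hs1 : IsPauliPM s1) (hg : ∀ i, IsPauliPM (g i))
    (hanti : Zj * s1 = -(s1 * Zj))
    (hcommZ : ∀ i, Zj * g i = g i * Zj)
    (hcomm : ∀ i i', g i * g i' = g i' * g i)
    (hcs1 : ∀ i, s1 * g i = g i * s1)
    (ρ₀ : Matrix (Fin n → Fin 2) (Fin n → Fin 2) ℂ)
    (hρ₀ : ρ₀ = ((1 : ℂ)/2^n) •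
      ((1 + s1) * ((List.finRange m).map (fun i => 1 + g i)).prod)) :
    Tj * ρ₀ * Tjᴴ = ((1 : ℂ)/2^n) •
      ((1 + ((Real.sqrt 2 : ℂ))⁻¹ • (s1 - Complex.I • (Zj * s1))) *
        ((List.finRange m).map (fun i => 1 + g i)).prod) := by
  have hr2 : (Real.sqrt 2 : ℂ)^2 = 2 := by
    rw [← Complex.ofReal_pow, Real.sq_sqrt (by norm_num : (2:ℝ) ≥ 0)]; norm_num
  have hrne : (Real.sqrt 2 : ℂ) ≠ 0 := by
    rw [Complex.ofReal_ne_zero]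
    positivity
  have hinv : ((Real.sqrt 2 : ℂ))⁻¹ = (Real.sqrt 2 : ℂ)/2 := by
    field_simp
    linear_combination (-1 : ℂ) * hr2
  have hZZ : Zj * Zj = 1 := by rw [hZj]; exact ZZ_one j
  have h3 : Zj * (s1 * Zj) = -s1 := by
    rw [← mul_assoc, hanti, neg_mul, mul_assoc, hZZ, mul_one]
  have hT : Tj = ((1 + ωc)/2) • 1 + ((1 - ωc)/2) • Zj := by
    rw [hTj, T_decomp, hZj]
  have hTH : Tjᴴ = ((1 + ωc')/2) • 1 + ((1 - ωc')/2) • Zj := by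
    rw [hTj, TH_decomp, hZj]
  have key : Tj * (1 + s1) * Tjᴴ
      = 1 + ((Real.sqrt 2 : ℂ))⁻¹ • (s1 - Complex.I • (Zj * s1)) := by
    rw [hTH, hT, hanti]
    simp only [mul_add, add_mul, mul_one, one_mul, neg_mul, mul_neg, neg_neg,
      smul_mul_assoc, mul_smul_comm, smul_smul, mul_assoc, hZZ, hanti, h3, smul_neg, smul_sub]
    match_scalars
    · simp only [ωc, ωc']
      linear_combination ((1 - Complex.I^2)/8) * hr2 - ((1:ℂ)/4) * Complex.I_sq
    · simp only [ωc, ωc']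
      linear_combination (-(1 - Complex.I^2)/8) * hr2 + ((1:ℂ)/4) * Complex.I_sq
    · simp only [ωc, ωc', hinv]
      ring
    · simp only [ωc, ωc', hinv]
      ring
  -- commuting past the product of (1 + g i)
  have hcommP : ((List.finRange m).map (fun i => 1 + g i)).prod * Tjᴴ
      = Tjᴴ * ((List.finRange m).map (fun i => 1 + g i)).prod := by
    refine (Commute.list_prod_right _ _ ?_).symm
    intro M hM
    rw [List.mem_map] at hM
    obtain ⟨i, -, rfl⟩ := hM
    have hZ1g : Commute Zj (1 + g i) := (Commute.one_right Zj).add_right (hcommZ i)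
    rw [hTH]
    exact ((Commute.one_left (1 + g i)).smul_left _).add_left (hZ1g.smul_left _)
  rw [hρ₀, Matrix.mul_smul, Matrix.smul_mul]
  congr 1
  rw [← mul_assoc Tj (1 + s1), mul_assoc (Tj * (1 + s1)), hcommP,
    ← mul_assoc (Tj * (1 + s1)), key]
end

section
/- Let ρ_A be the reduced state on a subsystem A of a pure state with one unit of magic, written in the bipartite magic gauge: ρ_A = 2^{-|A|}(I_A + (Z̄_A − Ȳ_A)/√2) ∏_{i=1}^{k} (I_A + a_i), where Z̄_A, Ȳ_A are anticommuting Hermitian Paulis on A commuting with all a_i, and a_1,…,a_k are independent commuting Hermitian Paulis on A generating a group without −I. Then the normalized Pauli spectrum of ρ_A has 2^k entries of one value and 2^{k+1} entries of half that value, yielding M̃₂(ρ_A) = log₂(4/3). -/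
open Matrix BigOperators Finset

def m4 : Fin 4 → Fin 4 → Fin 4 := fun a b =>
  ![![0,1,2,3],![1,0,3,2],![2,3,0,1],![3,2,1,0]] a b

noncomputable def w4 : Fin 4 → Fin 4 → ℂ := fun a b =>
  ![![1,1,1,1],![1,1,Complex.I,-Complex.I],![1,-Complex.I,1,Complex.I],![1,Complex.I,-Complex.I,1]] a b

lemma pauli1_mul (a b : Fin 4) : pauli1 a * pauli1 b = w4 a b • pauli1 (m4 a b) := by
  fin_cases a <;> fin_cases b <;>
    · ext i j
      fin_cases i <;> fin_cases j <;>
        simp [pauli1, m4, w4, Matrix.mul_apply, Fin.sum_univ_two, Matrix.vecHead, Matrix.vecTail, Complex.ext_iff]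

lemma w4_self (a : Fin 4) : w4 a a = 1 := by fin_cases a <;> simp [w4, Matrix.vecHead, Matrix.vecTail]

lemma m4_self (a : Fin 4) : m4 a a = 0 := by fin_cases a <;> rfl

lemma m4_eq_zero_iff {a b : Fin 4} : m4 a b = 0 ↔ a = b := by
  fin_cases a <;> fin_cases b <;> simp [m4]

lemma w4_pow4 (a b : Fin 4) : (w4 a b) ^ 4 = 1 := by
  fin_cases a <;> fin_cases b <;> norm_num [w4, Matrix.vecHead, Matrix.vecTail, pow_succ, Complex.I_mul_I]

lemma pauliString_zero {n : ℕ} : pauliString (fun _ => (0 : Fin 4)) = (1 : Matrix (Fin n → Fin 2) (Fin n → Fin 2) ℂ) := by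
  ext i j
  simp only [pauliString, Matrix.of_apply, pauli1]
  by_cases h : i = j
  · subst h
    simp [Matrix.one_apply]
  · rw [Matrix.one_apply_ne h]
    obtain ⟨k, hk⟩ : ∃ k, i k ≠ j k := by
      by_contra hc; push_neg at hc; exact h (funext hc)
    exact Finset.prod_eq_zero (Finset.mem_univ k) (Matrix.one_apply_ne hk)

lemma pauliString_mul {n : ℕ} (s t : Fin n → Fin 4) :
    pauliString s * pauliString t
      = (∏ k, w4 (s k) (t k)) • pauliString (fun k => m4 (s k) (t k)) := by
  ext i j
  simp only [Matrix.mul_apply, pauliString, Matrix.of_apply, Matrix.smul_apply, smul_eq_mul]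
  have : ∀ x : Fin n → Fin 2,
      (∏ k, pauli1 (s k) (i k) (x k)) * ∏ k, pauli1 (t k) (x k) (j k)
        = ∏ k, (pauli1 (s k) (i k) (x k) * pauli1 (t k) (x k) (j k)) := by
    intro x; rw [Finset.prod_mul_distrib]
  simp only [this]
  rw [← Fintype.prod_sum (fun k (v : Fin 2) => pauli1 (s k) (i k) v * pauli1 (t k) v (j k))]
  have : ∀ k, (∑ v : Fin 2, pauli1 (s k) (i k) v * pauli1 (t k) v (j k))
      = w4 (s k) (t k) * pauli1 (m4 (s k) (t k)) (i k) (j k) := by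
    intro k
    have := congrArg (fun M => M (i k) (j k)) (pauli1_mul (s k) (t k))
    simpa [Matrix.mul_apply, Matrix.smul_apply] using this
  simp only [this]
  rw [Finset.prod_mul_distrib]

lemma trace_pauliString {n : ℕ} (s : Fin n → Fin 4) :
    (pauliString s).trace = if (∀ k, s k = 0) then (2:ℂ)^n else 0 := by
  have htr1 : ∀ a : Fin 4, (∑ v : Fin 2, pauli1 a v v) = if a = 0 then (2:ℂ) else 0 := by
    intro a; fin_cases a <;> simp [pauli1, Fin.sum_univ_two] <;> norm_num
  simp only [Matrix.trace, Matrix.diag, pauliString, Matrix.of_apply]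
  rw [← Fintype.prod_sum (fun k (v : Fin 2) => pauli1 (s k) v v)]
  simp only [htr1]
  by_cases h : ∀ k, s k = 0
  · simp [h, Finset.prod_const, Finset.card_univ]
  · obtain ⟨k, hk⟩ := not_forall.mp h
    rw [if_neg h]
    exact Finset.prod_eq_zero (Finset.mem_univ k) (by simp [hk])

lemma trace_pauliString_mul {n : ℕ} (s t : Fin n → Fin 4) :
    (pauliString s * pauliString t).trace = if s = t then (2:ℂ)^n else 0 := by
  rw [pauliString_mul, Matrix.trace_smul, trace_pauliString]
  by_cases h : s = t
  · subst h
    simp [m4_self, w4_self]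
  · have h2 : ¬ (∀ k, m4 (s k) (t k) = 0) := by
      intro hc
      exact h (funext (fun k => m4_eq_zero_iff.mp (hc k)))
    simp [h, h2]

lemma pauliString_mul_self {n : ℕ} (s : Fin n → Fin 4) :
    pauliString s * pauliString s = 1 := by
  rw [pauliString_mul]
  simp [w4_self, m4_self, pauliString_zero]

lemma pauliString_smul_inj {n : ℕ} {s t : Fin n → Fin 4} {c d : ℂ}
    (h : c • pauliString s = d • pauliString t) (hc : c ≠ 0) : c = d ∧ s = t := by
  have hst : s = t := by
    by_contra hne
    have := congrArg (fun M => (M * pauliString s).trace) h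
    have hne' : t ≠ s := fun hh => hne hh.symm
    simp [Matrix.smul_mul, trace_pauliString_mul, hne'] at this
    exact hc this
  subst hst
  refine ⟨?_, rfl⟩
  have := congrArg (fun M => (M * pauliString s).trace) h
  simp [Matrix.smul_mul, trace_pauliString_mul] at this
  exact this

/-- phase-Pauli: Pauli with a 4th root of unity phase -/
def PhP {n : ℕ} (M : Matrix (Fin n → Fin 2) (Fin n → Fin 2) ℂ) : Prop :=
  ∃ (c : ℂ) (s : Fin n → Fin 4), c ^ 4 = 1 ∧ M = c • pauliString s

lemma PhP_one {n : ℕ} : PhP (1 : Matrix (Fin n → Fin 2) (Fin n → Fin 2) ℂ) :=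
  ⟨1, fun _ => 0, by norm_num, by rw [pauliString_zero]; simp⟩

lemma IsPauliPM.php {n : ℕ} {M : Matrix (Fin n → Fin 2) (Fin n → Fin 2) ℂ}
    (h : IsPauliPM M) : PhP M := by
  obtain ⟨ε, s, hε, rfl⟩ := h
  exact ⟨ε, s, by rcases hε with rfl | rfl <;> norm_num, rfl⟩

lemma PhP.mul {n : ℕ} {M N : Matrix (Fin n → Fin 2) (Fin n → Fin 2) ℂ}
    (hM : PhP M) (hN : PhP N) : PhP (M * N) := by
  obtain ⟨c, s, hc, rfl⟩ := hM
  obtain ⟨d, t, hd, rfl⟩ := hN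
  refine ⟨c * d * ∏ k, w4 (s k) (t k), fun k => m4 (s k) (t k), ?_, ?_⟩
  · have : (∏ k, w4 (s k) (t k)) ^ 4 = 1 := by
      rw [← Finset.prod_pow]
      exact Finset.prod_eq_one (fun k _ => w4_pow4 _ _)
    rw [mul_pow, mul_pow, hc, hd, this]; ring
  · rw [Matrix.smul_mul, Matrix.mul_smul, pauliString_mul, smul_smul, smul_smul]

lemma PhP.list_prod {n : ℕ} {L : List (Matrix (Fin n → Fin 2) (Fin n → Fin 2) ℂ)}
    (h : ∀ M ∈ L, PhP M) : PhP L.prod := by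
  induction L with
  | nil => simpa using PhP_one
  | cons x l ih =>
    rw [List.prod_cons]
    exact (h x (by simp)).mul (ih (fun M hM => h M (by simp [hM])))

lemma PhP.isPauliPM_of_sq_one {n : ℕ} {M : Matrix (Fin n → Fin 2) (Fin n → Fin 2) ℂ}
    (h : PhP M) (hsq : M * M = 1) : IsPauliPM M := by
  obtain ⟨c, s, hc, rfl⟩ := h
  have h1 : (c * c) • (1 : Matrix (Fin n → Fin 2) (Fin n → Fin 2) ℂ) = 1 := by
    calc (c * c) • (1 : Matrix (Fin n → Fin 2) (Fin n → Fin 2) ℂ)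
        = (c • pauliString s) * (c • pauliString s) := by
          rw [Matrix.smul_mul, Matrix.mul_smul, pauliString_mul_self, smul_smul]
      _ = 1 := hsq
  have hcc : c * c = 1 := by
    have := congrArg (fun M => M (fun _ => 0) (fun _ => 0)) h1
    simpa [Matrix.one_apply] using this
  have : c = 1 ∨ c = -1 := by
    have : (c - 1) * (c + 1) = 0 := by ring_nf; linear_combination hcc
    rcases mul_eq_zero.mp this with h' | h'
    · left; linear_combination h'
    · right; linear_combination h'
  exact ⟨c, s, this, rfl⟩

lemma IsPauliPM.sq {n : ℕ} {M : Matrix (Fin n → Fin 2) (Fin n → Fin 2) ℂ}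
    (h : IsPauliPM M) : M * M = 1 := by
  obtain ⟨ε, s, hε, rfl⟩ := h
  rw [Matrix.smul_mul, Matrix.mul_smul, pauliString_mul_self, smul_smul]
  rcases hε with rfl | rfl <;> norm_num

lemma grpElem_succ {n m : ℕ} (g : Fin (m+1) → Matrix (Fin n → Fin 2) (Fin n → Fin 2) ℂ)
    (f : Fin (m+1) → Bool) :
    grpElem g f = (if f 0 then g 0 else 1) * grpElem (fun i => g i.succ) (fun i => f i.succ) := by
  unfold grpElem
  rw [List.finRange_succ]
  simp [List.map_map, Function.comp_def]

lemma grpElem_false {n m : ℕ} (g : Fin m → Matrix (Fin n → Fin 2) (Fin n → Fin 2) ℂ) :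
    grpElem g (fun _ => false) = 1 := by
  unfold grpElem
  apply List.prod_eq_one
  intro x hx
  simp only [List.mem_map] at hx
  obtain ⟨i, _, rfl⟩ := hx
  simp

lemma commute_grpElem {n m : ℕ} {x : Matrix (Fin n → Fin 2) (Fin n → Fin 2) ℂ}
    {g : Fin m → Matrix (Fin n → Fin 2) (Fin n → Fin 2) ℂ}
    (h : ∀ i, Commute x (g i)) (f : Fin m → Bool) : Commute x (grpElem g f) := by
  apply Commute.list_prod_right
  intro y hy
  simp only [List.mem_map] at hy
  obtain ⟨i, _, rfl⟩ := hy
  by_cases hf : f i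
  · simpa [hf] using h i
  · simp [hf]

lemma grpElem_php {n m : ℕ} {g : Fin m → Matrix (Fin n → Fin 2) (Fin n → Fin 2) ℂ}
    (h : ∀ i, IsPauliPM (g i)) (f : Fin m → Bool) : PhP (grpElem g f) := by
  apply PhP.list_prod
  intro M hM
  simp only [List.mem_map] at hM
  obtain ⟨i, _, rfl⟩ := hM
  by_cases hf : f i
  · simpa [hf] using (h i).php
  · simpa [hf] using PhP_one

lemma grpElem_mul {n : ℕ} : ∀ {m : ℕ} (g : Fin m → Matrix (Fin n → Fin 2) (Fin n → Fin 2) ℂ),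
    (∀ i j, Commute (g i) (g j)) → (∀ i, g i * g i = 1) →
    ∀ f f' : Fin m → Bool,
    grpElem g f * grpElem g f' = grpElem g (fun i => xor (f i) (f' i))
  | 0, g, _, _, f, f' => by
    have h1 : ∀ h : Fin 0 → Bool, grpElem g h = 1 := by
      intro h; unfold grpElem; simp
    rw [h1, h1, h1, one_mul]
  | (m+1), g, hcomm, hsq, f, f' => by
    simp only [grpElem_succ]
    have hx : Commute (if f' 0 then g 0 else 1)
        (grpElem (fun i => g i.succ) (fun i => f i.succ)) := by
      apply commute_grpElem
      intro i
      by_cases hf : f' 0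
      · simpa [hf] using hcomm 0 i.succ
      · simp [hf]
    have hAA : (if f 0 then g 0 else 1) * (if f' 0 then g 0 else 1)
        = (if xor (f 0) (f' 0) then g 0 else 1) := by
      cases hf : f 0 <;> cases hf' : f' 0 <;> simp [hf, hf', hsq 0]
    have ih := grpElem_mul (fun i => g i.succ) (fun i j => hcomm _ _) (fun i => hsq _)
      (fun i => f i.succ) (fun i => f' i.succ)
    rw [hx.symm.mul_mul_mul_comm, hAA, ih]

lemma prod_one_add {n : ℕ} : ∀ {m : ℕ} (g : Fin m → Matrix (Fin n → Fin 2) (Fin n → Fin 2) ℂ),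
    ((List.finRange m).map (fun i => 1 + g i)).prod = ∑ f : Fin m → Bool, grpElem g f
  | 0, g => by
    unfold grpElem
    simp
  | (m+1), g => by
    rw [List.finRange_succ, List.map_cons, List.prod_cons, List.map_map]
    have ih := prod_one_add (fun i => g i.succ)
    rw [show ((List.finRange m).map ((fun i => 1 + g i) ∘ Fin.succ)).prod
        = ((List.finRange m).map (fun i => 1 + g i.succ)).prod from rfl, ih]
    rw [← ((Fin.consEquiv (fun _ : Fin (m+1) => Bool)).sum_comp (fun f => grpElem g f))]
    rw [Fintype.sum_prod_type]
    have hdecomp : ∀ (b : Bool) (f' : Fin m → Bool),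
        grpElem g (Fin.consEquiv (fun _ => Bool) (b, f'))
          = (if b then g 0 else 1) * grpElem (fun i => g i.succ) f' := by
      intro b f'
      rw [grpElem_succ]
      simp [Fin.consEquiv]
    simp only [hdecomp]
    rw [Fintype.sum_bool]
    simp only [if_true, Bool.false_eq_true, if_false, one_mul, ← Finset.mul_sum]
    rw [add_mul, one_mul, add_comm]


/-- bipartite magic gauge, case both logicals survive: for the reduced state
`ρ_A = 2^{-|A|}(I + (Z̄_A − Ȳ_A)/√2)∏ᵢ(I + aᵢ)` on a `q`-qubit subsystem `A`, with `Z̄_A, Ȳ_A`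
anticommuting Hermitian Paulis commuting with the independent commuting generators `aᵢ`
(whose group avoids `−I`), and neither `Z̄_A`, `Ȳ_A` nor `Ȳ_AZ̄_A⟨aᵢ⟩`-type collisions in
`±⟨aᵢ⟩`, the normalized Pauli spectrum has `2^k` entries of one value and `2^{k+1}` entries
of half that value, and `M̃₂(ρ_A) = log₂(4/3)`. -/
theorem stmt_10 {q k : ℕ}
    (a : Fin k → Matrix (Fin q → Fin 2) (Fin q → Fin 2) ℂ)
    (Zb Yb : Matrix (Fin q → Fin 2) (Fin q → Fin 2) ℂ)
    (ha : ∀ i, IsPauliPM (a i))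
    (hcomm : ∀ i i', a i * a i' = a i' * a i)
    (hindep : ∀ f f' : Fin k → Bool, grpElem a f = grpElem a f' → f = f')
    (hnoNegI : ∀ f : Fin k → Bool, grpElem a f ≠ -1)
    (hZb : IsPauliPM Zb) (hYb : IsPauliPM Yb)
    (hZcomm : ∀ i, Zb * a i = a i * Zb) (hYcomm : ∀ i, Yb * a i = a i * Yb)
    (hanti : Zb * Yb = -(Yb * Zb))
    (hZnot : ∀ (f : Fin k → Bool) (ε : ℂ), (ε = 1 ∨ ε = -1) → Zb ≠ ε • grpElem a f)
    (hYnot : ∀ (f : Fin k → Bool) (ε : ℂ), (ε = 1 ∨ ε = -1) → Yb ≠ ε • grpElem a f)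
    (hYZnot : ∀ (f : Fin k → Bool) (ε : ℂ), (ε = 1 ∨ ε = -1) → Yb ≠ ε • (Zb * grpElem a f))
    (ρA : Matrix (Fin q → Fin 2) (Fin q → Fin 2) ℂ)
    (hρA : ρA = ((1 : ℂ)/2 ^ q) •
      ((1 + ((Real.sqrt 2 : ℂ))⁻¹ • (Zb - Yb)) *
        ((List.finRange k).map (fun i => 1 + a i)).prod)) :
    Nat.card {P : Fin q → Fin 4 | ((ρA * pauliString P).trace) ^ 2 = 1} = 2 ^ k ∧
    Nat.card {P : Fin q → Fin 4 | ((ρA * pauliString P).trace) ^ 2 = 1 / 2} = 2 ^ (k + 1) ∧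
    (∀ P : Fin q → Fin 4, ((ρA * pauliString P).trace) ^ 2 = 1 ∨
      ((ρA * pauliString P).trace) ^ 2 = 1 / 2 ∨ (ρA * pauliString P).trace = 0) ∧
    sre2 ρA = Real.logb 2 (4 / 3) := by
  classical
  have hcommute : ∀ i j, Commute (a i) (a j) := fun i j => hcomm i j
  have hasq : ∀ i, a i * a i = 1 := fun i => (ha i).sq
  have hgsq : ∀ f, grpElem a f * grpElem a f = 1 := by
    intro f
    rw [grpElem_mul a hcommute hasq]
    simpa [Bool.xor_self] using grpElem_false a
  have hgPM : ∀ f, IsPauliPM (grpElem a f) :=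
    fun f => (grpElem_php ha f).isPauliPM_of_sq_one (hgsq f)
  have hZsq : Zb * Zb = 1 := hZb.sq
  have hYsq : Yb * Yb = 1 := hYb.sq
  have hZcomm' : ∀ f, Commute Zb (grpElem a f) :=
    fun f => commute_grpElem (fun i => hZcomm i) f
  have hYcomm' : ∀ f, Commute Yb (grpElem a f) :=
    fun f => commute_grpElem (fun i => hYcomm i) f
  have hZgPM : ∀ f, IsPauliPM (Zb * grpElem a f) := by
    intro f
    refine (hZb.php.mul (grpElem_php ha f)).isPauliPM_of_sq_one ?_
    rw [(hZcomm' f).symm.mul_mul_mul_comm, hZsq, hgsq, one_mul]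
  have hYgPM : ∀ f, IsPauliPM (Yb * grpElem a f) := by
    intro f
    refine (hYb.php.mul (grpElem_php ha f)).isPauliPM_of_sq_one ?_
    rw [(hYcomm' f).symm.mul_mul_mul_comm, hYsq, hgsq, one_mul]
  choose e1 t he1 ht using hgPM
  choose e2 u he2 hu using hZgPM
  choose e3 v he3 hv using hYgPM
  have pm_mul : ∀ {x y : ℂ}, (x = 1 ∨ x = -1) → (y = 1 ∨ y = -1) → (x*y = 1 ∨ x*y = -1) := by
    rintro x y (rfl|rfl) (rfl|rfl) <;> norm_num
  have pm_sq : ∀ {x : ℂ}, (x = 1 ∨ x = -1) → x ^ 2 = 1 := by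
    rintro x (rfl|rfl) <;> norm_num
  have same_str : ∀ {X X' : Matrix (Fin q → Fin 2) (Fin q → Fin 2) ℂ} {e e' : ℂ}
      {s : Fin q → Fin 4}, (e' = 1 ∨ e' = -1) →
      X = e • pauliString s → X' = e' • pauliString s → X = (e * e') • X' := by
    intro X X' e e' s he' hX hX'
    subst hX hX'
    rw [smul_smul]
    congr 1
    rcases he' with rfl | rfl <;> ring
  have keyinj : ∀ f f' (c : ℂ), (c = 1 ∨ c = -1) → grpElem a f = c • grpElem a f' → f = f' := by
    rintro f f' c (rfl|rfl) h
    · exact hindep f f' (by simpa using h)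
    · exfalso
      apply hnoNegI (fun i => xor (f i) (f' i))
      rw [← grpElem_mul a hcommute hasq, h]
      simp [hgsq f']
  have tinj : Function.Injective t := by
    intro f f' h
    exact keyinj f f' (e1 f * e1 f') (pm_mul (he1 f) (he1 f'))
      (same_str (he1 f') (h ▸ ht f) (ht f'))
  have uinj : Function.Injective u := by
    intro f f' h
    have h2 : Zb * grpElem a f = (e2 f * e2 f') • (Zb * grpElem a f') :=
      same_str (he2 f') (h ▸ hu f) (hu f')
    apply keyinj f f' _ (pm_mul (he2 f) (he2 f'))
    have := congrArg (fun M => Zb * M) h2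
    simpa [← mul_assoc, hZsq, Matrix.mul_smul] using this
  have vinj : Function.Injective v := by
    intro f f' h
    have h2 : Yb * grpElem a f = (e3 f * e3 f') • (Yb * grpElem a f') :=
      same_str (he3 f') (h ▸ hv f) (hv f')
    apply keyinj f f' _ (pm_mul (he3 f) (he3 f'))
    have := congrArg (fun M => Yb * M) h2
    simpa [← mul_assoc, hYsq, Matrix.mul_smul] using this
  have tu : ∀ f f', t f ≠ u f' := by
    intro f f' h
    have h2 : Zb * grpElem a f' = (e2 f' * e1 f) • grpElem a f :=
      same_str (he1 f) (h ▸ hu f') (ht f)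
    have h3 : Zb = (e2 f' * e1 f) • grpElem a (fun i => xor (f i) (f' i)) := by
      have h4 : Zb = (Zb * grpElem a f') * grpElem a f' := by
        rw [mul_assoc, hgsq f', mul_one]
      rw [h4, h2, Matrix.smul_mul, grpElem_mul a hcommute hasq]
    exact hZnot _ _ (pm_mul (he2 f') (he1 f)) h3
  have tv : ∀ f f', t f ≠ v f' := by
    intro f f' h
    have h2 : Yb * grpElem a f' = (e3 f' * e1 f) • grpElem a f :=
      same_str (he1 f) (h ▸ hv f') (ht f)
    have h3 : Yb = (e3 f' * e1 f) • grpElem a (fun i => xor (f i) (f' i)) := by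
      have h4 : Yb = (Yb * grpElem a f') * grpElem a f' := by
        rw [mul_assoc, hgsq f', mul_one]
      rw [h4, h2, Matrix.smul_mul, grpElem_mul a hcommute hasq]
    exact hYnot _ _ (pm_mul (he3 f') (he1 f)) h3
  have uv : ∀ f f', u f ≠ v f' := by
    intro f f' h
    have h2 : Yb * grpElem a f' = (e3 f' * e2 f) • (Zb * grpElem a f) :=
      same_str (he2 f) (h ▸ hv f') (hu f)
    have h3 : Yb = (e3 f' * e2 f) • (Zb * grpElem a (fun i => xor (f i) (f' i))) := by
      have h4 : Yb = (Yb * grpElem a f') * grpElem a f' := by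
        rw [mul_assoc, hgsq f', mul_one]
      rw [h4, h2, Matrix.smul_mul, mul_assoc, grpElem_mul a hcommute hasq]
    exact hYZnot _ _ (pm_mul (he3 f') (he2 f)) h3
  have trace_smul_pauli : ∀ (c : ℂ) (s P : Fin q → Fin 4),
      ((c • pauliString s) * pauliString P).trace = if s = P then c * 2^q else 0 := by
    intro c s P
    rw [Matrix.smul_mul, Matrix.trace_smul, trace_pauliString_mul]
    simp [mul_ite]
  set r : ℂ := ((Real.sqrt 2 : ℂ))⁻¹ with hrdef
  have h2q : (2:ℂ)^q ≠ 0 := pow_ne_zero _ two_ne_zero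
  have hTr : ∀ P, (ρA * pauliString P).trace =
      (∑ f, if t f = P then e1 f else 0)
      + r * (∑ f, if u f = P then e2 f else 0)
      - r * (∑ f, if v f = P then e3 f else 0) := by
    intro P
    have e1' : ρA * pauliString P = ((1:ℂ)/2^q) • (
        (∑ f, grpElem a f * pauliString P)
        + r • (∑ f, Zb * grpElem a f * pauliString P)
        - r • (∑ f, Yb * grpElem a f * pauliString P)) := by
      rw [hρA, prod_one_add a, Matrix.smul_mul]
      congr 1
      simp only [add_mul, sub_mul, one_mul, smul_mul_assoc, Finset.sum_mul, Finset.mul_sum,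
        mul_assoc, smul_sub, Finset.sum_add_distrib, Finset.sum_sub_distrib, ← Finset.smul_sum]
      abel
    rw [e1', Matrix.trace_smul, Matrix.trace_sub, Matrix.trace_add, Matrix.trace_smul,
      Matrix.trace_smul, Matrix.trace_sum, Matrix.trace_sum, Matrix.trace_sum]
    have A1 : ∀ f, (grpElem a f * pauliString P).trace
        = (if t f = P then e1 f else 0) * 2^q := by
      intro f; rw [ht f, trace_smul_pauli, ite_mul, zero_mul]
    have A2 : ∀ f, (Zb * grpElem a f * pauliString P).trace
        = (if u f = P then e2 f else 0) * 2^q := by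
      intro f; rw [hu f, trace_smul_pauli, ite_mul, zero_mul]
    have A3 : ∀ f, (Yb * grpElem a f * pauliString P).trace
        = (if v f = P then e3 f else 0) * 2^q := by
      intro f; rw [hv f, trace_smul_pauli, ite_mul, zero_mul]
    simp only [A1, A2, A3, ← Finset.sum_mul, smul_eq_mul]
    field_simp
  have sum_t : ∀ f, (∑ f', if t f' = t f then e1 f' else 0) = e1 f := by
    intro f
    rw [Finset.sum_eq_single f]
    · simp
    · intro f' _ hne; exact if_neg (fun h => hne (tinj h))
    · intro h; exact absurd (Finset.mem_univ f) h
  have sum_u : ∀ f, (∑ f', if u f' = u f then e2 f' else 0) = e2 f := by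
    intro f
    rw [Finset.sum_eq_single f]
    · simp
    · intro f' _ hne; exact if_neg (fun h => hne (uinj h))
    · intro h; exact absurd (Finset.mem_univ f) h
  have sum_v : ∀ f, (∑ f', if v f' = v f then e3 f' else 0) = e3 f := by
    intro f
    rw [Finset.sum_eq_single f]
    · simp
    · intro f' _ hne; exact if_neg (fun h => hne (vinj h))
    · intro h; exact absurd (Finset.mem_univ f) h
  have hTt : ∀ f, (ρA * pauliString (t f)).trace = e1 f := by
    intro f
    rw [hTr, sum_t]
    rw [Finset.sum_eq_zero (fun f' _ => if_neg (fun h => tu f f' h.symm)),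
      Finset.sum_eq_zero (fun f' _ => if_neg (fun h => tv f f' h.symm))]
    ring
  have hTu : ∀ f, (ρA * pauliString (u f)).trace = r * e2 f := by
    intro f
    rw [hTr, sum_u]
    rw [Finset.sum_eq_zero (fun f' _ => if_neg (tu f' f)),
      Finset.sum_eq_zero (fun f' _ => if_neg (fun h => uv f f' h.symm))]
    ring
  have hTv : ∀ f, (ρA * pauliString (v f)).trace = -(r * e3 f) := by
    intro f
    rw [hTr, sum_v]
    rw [Finset.sum_eq_zero (fun f' _ => if_neg (tv f' f)),
      Finset.sum_eq_zero (fun f' _ => if_neg (uv f' f))]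
    ring
  have hT0 : ∀ P, (∀ f, t f ≠ P) → (∀ f, u f ≠ P) → (∀ f, v f ≠ P) →
      (ρA * pauliString P).trace = 0 := by
    intro P h1 h2 h3
    rw [hTr, Finset.sum_eq_zero (fun f _ => if_neg (h1 f)),
      Finset.sum_eq_zero (fun f _ => if_neg (h2 f)),
      Finset.sum_eq_zero (fun f _ => if_neg (h3 f))]
    ring
  have hr2 : r^2 = 1/2 := by
    rw [hrdef, inv_pow, ← Complex.ofReal_pow, Real.sq_sqrt (by norm_num : (0:ℝ) ≤ 2)]
    norm_num
  have sq_t : ∀ f, (ρA * pauliString (t f)).trace ^ 2 = 1 := by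
    intro f; rw [hTt]; exact pm_sq (he1 f)
  have sq_u : ∀ f, (ρA * pauliString (u f)).trace ^ 2 = 1/2 := by
    intro f; rw [hTu, mul_pow, hr2, pm_sq (he2 f), mul_one]
  have sq_v : ∀ f, (ρA * pauliString (v f)).trace ^ 2 = 1/2 := by
    intro f; rw [hTv, neg_pow, mul_pow, hr2, pm_sq (he3 f)]; ring
  -- classification
  have classify : ∀ P : Fin q → Fin 4, ((ρA * pauliString P).trace) ^ 2 = 1 ∨
      ((ρA * pauliString P).trace) ^ 2 = 1 / 2 ∨ (ρA * pauliString P).trace = 0 := by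
    intro P
    by_cases h1 : ∃ f, t f = P
    · obtain ⟨f, rfl⟩ := h1; exact Or.inl (sq_t f)
    · by_cases h2 : ∃ f, u f = P
      · obtain ⟨f, rfl⟩ := h2; exact Or.inr (Or.inl (sq_u f))
      · by_cases h3 : ∃ f, v f = P
        · obtain ⟨f, rfl⟩ := h3; exact Or.inr (Or.inl (sq_v f))
        · push_neg at h1 h2 h3
          exact Or.inr (Or.inr (hT0 P h1 h2 h3))
  have hset1 : {P : Fin q → Fin 4 | ((ρA * pauliString P).trace)^2 = 1} = Set.range t := by
    ext P
    simp only [Set.mem_setOf_eq, Set.mem_range]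
    constructor
    · intro hP
      by_cases h1 : ∃ f, t f = P
      · exact h1
      · exfalso
        by_cases h2 : ∃ f, u f = P
        · obtain ⟨f, rfl⟩ := h2; rw [sq_u] at hP; norm_num at hP
        · by_cases h3 : ∃ f, v f = P
          · obtain ⟨f, rfl⟩ := h3; rw [sq_v] at hP; norm_num at hP
          · push_neg at h1 h2 h3
            rw [hT0 P h1 h2 h3] at hP; norm_num at hP
    · rintro ⟨f, rfl⟩; exact sq_t f
  have hset2 : {P : Fin q → Fin 4 | ((ρA * pauliString P).trace)^2 = 1/2}
      = Set.range u ∪ Set.range v := by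
    ext P
    simp only [Set.mem_setOf_eq, Set.mem_union, Set.mem_range]
    constructor
    · intro hP
      by_cases h2 : ∃ f, u f = P
      · exact Or.inl h2
      · by_cases h3 : ∃ f, v f = P
        · exact Or.inr h3
        · exfalso
          by_cases h1 : ∃ f, t f = P
          · obtain ⟨f, rfl⟩ := h1; rw [sq_t] at hP; norm_num at hP
          · push_neg at h1 h2 h3
            rw [hT0 P h1 h2 h3] at hP; norm_num at hP
    · rintro (⟨f, rfl⟩ | ⟨f, rfl⟩)
      · exact sq_u f
      · exact sq_v f
  have hcardfun : Nat.card (Fin k → Bool) = 2^k := by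
    simp [Nat.card_eq_fintype_card]
  have card1 : Nat.card {P : Fin q → Fin 4 | ((ρA * pauliString P).trace)^2 = 1} = 2^k := by
    rw [hset1, Nat.card_range_of_injective tinj, hcardfun]
  have card2 : Nat.card {P : Fin q → Fin 4 | ((ρA * pauliString P).trace)^2 = 1/2}
      = 2^(k+1) := by
    rw [hset2, Nat.card_coe_set_eq,
      Set.ncard_union_eq (by
        rw [Set.disjoint_left]
        rintro P ⟨f, rfl⟩ ⟨f', h⟩
        exact uv f f' h.symm) (Set.toFinite _) (Set.toFinite _)]
    rw [← Nat.card_coe_set_eq, ← Nat.card_coe_set_eq,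
      Nat.card_range_of_injective uinj, Nat.card_range_of_injective vinj, hcardfun]
    rw [pow_succ]
    ring
  refine ⟨card1, card2, classify, ?_⟩
  -- sre2 computation
  set Ft := Finset.image t Finset.univ with hFt
  set Fu := Finset.image u Finset.univ with hFu
  set Fv := Finset.image v Finset.univ with hFv
  have hdis2 : Disjoint Fu Fv := by
    rw [Finset.disjoint_left]
    rintro P hPu hPv
    rw [hFu, Finset.mem_image] at hPu
    rw [hFv, Finset.mem_image] at hPv
    obtain ⟨f, _, rfl⟩ := hPu
    obtain ⟨f', _, h⟩ := hPv
    exact uv f f' h.symm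
  have hdis1 : Disjoint Ft (Fu ∪ Fv) := by
    rw [Finset.disjoint_left]
    rintro P hPt hPuv
    rw [hFt, Finset.mem_image] at hPt
    obtain ⟨f, _, rfl⟩ := hPt
    rw [Finset.mem_union] at hPuv
    rcases hPuv with h | h
    · rw [hFu, Finset.mem_image] at h
      obtain ⟨f', _, h⟩ := h
      exact tu f f' h.symm
    · rw [hFv, Finset.mem_image] at h
      obtain ⟨f', _, h⟩ := h
      exact tv f f' h.symm
  have hnotmem : ∀ P, P ∉ Ft ∪ (Fu ∪ Fv) → (ρA * pauliString P).trace = 0 := by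
    intro P hP
    simp only [Finset.mem_union, hFt, hFu, hFv, Finset.mem_image, Finset.mem_univ, true_and,
      not_or, not_exists] at hP
    exact hT0 P hP.1 hP.2.1 hP.2.2
  have hcards : (Finset.univ : Finset (Fin k → Bool)).card = 2^k := by simp
  have hsplit : ∀ (F : (Fin q → Fin 4) → ℂ),
      (∀ P, P ∉ Ft ∪ (Fu ∪ Fv) → F P = 0) →
      (∑ P, F P) = (∑ f, F (t f)) + ((∑ f, F (u f)) + (∑ f, F (v f))) := by
    intro F hF
    rw [← Finset.sum_subset (Finset.subset_univ (Ft ∪ (Fu ∪ Fv))) (fun P _ hP => hF P hP)]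
    rw [Finset.sum_union hdis1, Finset.sum_union hdis2]
    rw [hFt, hFu, hFv, Finset.sum_image (fun f _ f' _ h => tinj h),
        Finset.sum_image (fun f _ f' _ h => uinj h), Finset.sum_image (fun f _ f' _ h => vinj h)]
  have hS2 : (∑ P : Fin q → Fin 4, ((ρA * pauliString P).trace)^2) = 2^(k+1) := by
    rw [hsplit _ (fun P hP => by rw [hnotmem P hP]; ring)]
    simp only [sq_t, sq_u, sq_v]
    simp only [Finset.sum_const, nsmul_eq_mul, hcards]
    push_cast
    ring
  have q4 : ∀ x : ℂ, x^4 = (x^2)^2 := by intro x; ring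
  have hS4 : (∑ P : Fin q → Fin 4, ((ρA * pauliString P).trace)^4) = 2^k * (3/2) := by
    rw [hsplit _ (fun P hP => by rw [q4, hnotmem P hP]; ring)]
    simp only [q4, sq_t, sq_u, sq_v]
    simp only [Finset.sum_const, nsmul_eq_mul, hcards]
    push_cast
    ring
  unfold sre2
  rw [hS2, hS4]
  have hrat : ((2:ℂ)^k * (3/2)) / (2^(k+1)) = 3/4 := by
    have h2k : (2:ℂ)^k ≠ 0 := pow_ne_zero _ two_ne_zero
    rw [pow_succ]
    field_simp
    ring
  rw [hrat]
  have hre : ((3:ℂ)/4).re = 3/4 := by norm_num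
  rw [hre, show (3/4 : ℝ) = (4/3)⁻¹ by norm_num, Real.logb_inv, neg_neg]
end
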